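/- Define f_1(x) = ∑_{i≥0} α_{i,1}·x^{i+2}/(i+2)!, where α_{i,1} is determined by α_{i,0} = α_{0,i} = 1 and the recursion α_{i+1,j+1} = α_{i+1,j} + α_{i,j+1} + (1/2)∑_{p=0}^i ∑_{q=0}^j binomial(i+j+4,p+q+2)·α_{p,q}·α_{i-p,j-q}. Then f_1(x) = 2e^{2x} - ((1/2)x² + 2x + 2)e^x for all real x. -/

import Mathlib

open Finset

lemma choose_shift_sum (i : ℕ) :
    (∑ p ∈ Finset.range (i + 1), ((i + 4).choose (p + 2) : ℚ))
      = 2 ^ (i + 4) - 2 * (i : ℚ) - 10 := by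
  have h : (∑ k ∈ Finset.range (i + 5), ((i + 4).choose k : ℚ)) = 2 ^ (i + 4) := by
    rw [← Nat.cast_sum]
    rw [Nat.sum_range_choose]
    push_cast; ring
  rw [Finset.sum_range_succ, Finset.sum_range_succ] at h
  rw [Finset.sum_range_succ' (fun k => ((i + 4).choose k : ℚ)) (i + 2)] at h
  rw [Finset.sum_range_succ' (fun k => ((i + 4).choose (k + 1) : ℚ)) (i + 1)] at h
  simp only [show ∀ p : ℕ, p + 1 + 1 = p + 2 from fun p => rfl] at h
  have e1 : ((i + 4).choose (i + 3) : ℚ) = (i : ℚ) + 4 := by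
    rw [show i + 4 = (i + 3) + 1 by ring, Nat.choose_succ_self_right]
    push_cast; ring
  have e2 : ((i + 4).choose (i + 4) : ℚ) = 1 := by
    rw [Nat.choose_self]; norm_num
  have e3 : ((i + 4).choose 1 : ℚ) = (i : ℚ) + 4 := by
    rw [Nat.choose_one_right]; push_cast; ring
  have e4 : ((i + 4).choose 0 : ℚ) = 1 := by norm_num
  rw [e1, e2, e3, e4] at h
  linarith [h]

lemma a_one_closed (a : ℕ → ℕ → ℚ)
    (h1 : ∀ i, a i 0 = 1) (h2 : ∀ i, a 0 i = 1)
    (hrec : ∀ i j, a (i + 1) (j + 1) = a (i + 1) j + a i (j + 1)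
      + (1 / 2) * ∑ p ∈ Finset.range (i + 1), ∑ q ∈ Finset.range (j + 1),
          ((i + j + 4).choose (p + q + 2) : ℚ) * a p q * a (i - p) (j - q)) :
    ∀ n : ℕ, a n 1 = 2 ^ (n + 3) - (n : ℚ) * ((n : ℚ) - 1) / 2 - 4 * n - 7 := by
  intro n
  induction n with
  | zero => rw [h2 1]; norm_num
  | succ n ih =>
      have h := hrec n 0
      simp only [Nat.add_zero, Nat.zero_add, Finset.sum_range_one, Nat.sub_zero,
        Nat.sub_self, h1, mul_one] at h
      rw [choose_shift_sum] at h
      rw [h, ih]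
      push_cast
      ring

lemma hasSum_exp_real (y : ℝ) :
    HasSum (fun n : ℕ => y ^ n / (n.factorial : ℝ)) (Real.exp y) := by
  rw [Real.exp_eq_exp_ℝ]
  exact NormedSpace.expSeries_div_hasSum_exp y

lemma hasSum_exp_shift2 (y : ℝ) :
    HasSum (fun n : ℕ => y ^ (n + 2) / ((n + 2).factorial : ℝ))
      (Real.exp y - 1 - y) := by
  have h := (hasSum_nat_add_iff' (f := fun n : ℕ => y ^ n / (n.factorial : ℝ)) 2).mpr
    (hasSum_exp_real y)
  have : (∑ i ∈ Finset.range 2, y ^ i / (i.factorial : ℝ)) = 1 + y := by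
    simp [Finset.sum_range_succ]
  rw [this] at h
  have e : Real.exp y - 1 - y = Real.exp y - (1 + y) := by ring
  rw [e]
  exact h

theorem f_one_closed_form (a : ℕ → ℕ → ℚ)
    (h1 : ∀ i, a i 0 = 1) (h2 : ∀ i, a 0 i = 1)
    (hrec : ∀ i j, a (i + 1) (j + 1) = a (i + 1) j + a i (j + 1)
      + (1 / 2) * ∑ p ∈ Finset.range (i + 1), ∑ q ∈ Finset.range (j + 1),
          ((i + j + 4).choose (p + q + 2) : ℚ) * a p q * a (i - p) (j - q)) :
    ∀ x : ℝ, HasSum (fun i : ℕ => (a i 1 : ℝ) * x ^ (i + 2) / ((i + 2).factorial : ℝ))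
      (2 * Real.exp (2 * x) - ((1 / 2) * x ^ 2 + 2 * x + 2) * Real.exp x) := by
  intro x
  have hA := a_one_closed a h1 h2 hrec
  -- component sums
  have s1 : HasSum (fun n : ℕ => 2 * ((2 * x) ^ (n + 2) / ((n + 2).factorial : ℝ)))
      (2 * (Real.exp (2 * x) - 1 - 2 * x)) := (hasSum_exp_shift2 (2 * x)).mul_left 2
  have s2 : HasSum (fun n : ℕ => (x ^ 2 / 2) * (x ^ n / (n.factorial : ℝ)))
      ((x ^ 2 / 2) * Real.exp x) := (hasSum_exp_real x).mul_left _
  have s3 : HasSum (fun n : ℕ => (2 * x) * (x ^ (n + 1) / ((n + 1).factorial : ℝ)))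
      ((2 * x) * (Real.exp x - 1)) := by
    have h := (hasSum_nat_add_iff' (f := fun n : ℕ => x ^ n / (n.factorial : ℝ)) 1).mpr
      (hasSum_exp_real x)
    simp only [Finset.sum_range_one] at h
    norm_num at h
    exact h.mul_left _
  have s4 : HasSum (fun n : ℕ => 2 * (x ^ (n + 2) / ((n + 2).factorial : ℝ)))
      (2 * (Real.exp x - 1 - x)) := (hasSum_exp_shift2 x).mul_left 2
  have stot := s1.sub ((s2.add s3).add s4)
  have heq : (fun n : ℕ => 2 * ((2 * x) ^ (n + 2) / ((n + 2).factorial : ℝ))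
        - ((x ^ 2 / 2) * (x ^ n / (n.factorial : ℝ))
          + (2 * x) * (x ^ (n + 1) / ((n + 1).factorial : ℝ))
          + 2 * (x ^ (n + 2) / ((n + 2).factorial : ℝ))))
      = (fun i : ℕ => (a i 1 : ℝ) * x ^ (i + 2) / ((i + 2).factorial : ℝ)) := by
    funext n
    have hcast : ((a n 1 : ℚ) : ℝ)
        = 2 ^ (n + 3) - (n : ℝ) * ((n : ℝ) - 1) / 2 - 4 * n - 7 := by
      rw [hA n]; push_cast; ring
    rw [hcast]
    have f2 : ((n + 2).factorial : ℝ) = ((n : ℝ) + 2) * ((n : ℝ) + 1) * (n.factorial : ℝ) := by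
      rw [Nat.factorial_succ, Nat.factorial_succ]; push_cast; ring
    have f1 : ((n + 1).factorial : ℝ) = ((n : ℝ) + 1) * (n.factorial : ℝ) := by
      rw [Nat.factorial_succ]; push_cast; ring
    have hn0 : (n.factorial : ℝ) ≠ 0 := by positivity
    have hn1 : (n : ℝ) + 1 ≠ 0 := by positivity
    have hn2 : (n : ℝ) + 2 ≠ 0 := by positivity
    rw [f2, f1]
    field_simp
    ring
  rw [heq] at stot
  convert stot using 1
  · rfl
  ring
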